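/- Let N ≥ 2 and let W be the complex vector space of symmetric bilinear maps B : ℂ^N × ℂ^N → ℂ^N such that for every v ∈ ℂ^N the endomorphism w ↦ B(v,w) of ℂ^N has trace zero. With the action of the special linear Lie algebra sl(N,ℂ) given by (x·B)(v,w) = x(B(v,w)) − B(x v, w) − B(v, x w), W is a nonzero irreducible sl(N,ℂ)-module: its only Lie submodules are 0 and W. -/

import Mathlib

open Finset

namespace SlIrredAux

noncomputable section

abbrev CN (N : ℕ) := Fin N → Fin N → Fin N → ℂ

variable {N : ℕ}

/-- Kronecker delta. -/
def kd (x y : Fin N) : ℂ := if x = y then 1 else 0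

lemma kd_self (x : Fin N) : kd x x = 1 := if_pos rfl
lemma kd_ne {x y : Fin N} (h : x ≠ y) : kd x y = 0 := if_neg h

/-- basic symmetric tensor with a vector output. -/
def P (p q r : Fin N) : CN N := fun i j k => (kd i p * kd j q + kd i q * kd j p) * kd k r

lemma P_comm (p q r : Fin N) : P p q r = P q p r := by
  funext i j k; simp only [P]; ring

/-- action of the elementary matrix `E a b` in coordinates. -/
def actC (a b : Fin N) (c : CN N) : CN N :=
  fun i j k => kd k a * c i j b - kd i b * c a j k - kd j b * c i a k

/-- action of the diagonal matrix `diagonal h` in coordinates. -/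
def dactC (h : Fin N → ℂ) (c : CN N) : CN N := fun i j k => (h k - h i - h j) * c i j k

lemma actC_P (a b p q r : Fin N) :
    actC a b (P p q r) = kd b r • P p q a - kd a p • P b q r - kd a q • P p b r := by
  funext i j k
  simp only [actC, P, Pi.smul_apply, Pi.sub_apply, smul_eq_mul]
  ring

lemma actC_add (a b : Fin N) (c d : CN N) : actC a b (c + d) = actC a b c + actC a b d := by
  funext i j k; simp only [actC, Pi.add_apply]; ring

lemma actC_sub (a b : Fin N) (c d : CN N) : actC a b (c - d) = actC a b c - actC a b d := by
  funext i j k; simp only [actC, Pi.sub_apply]; ring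

lemma actC_smul (a b : Fin N) (t : ℂ) (c : CN N) : actC a b (t • c) = t • actC a b c := by
  funext i j k; simp only [actC, Pi.smul_apply, smul_eq_mul]; ring

/-- the bilinear map associated to a coordinate array. -/
def toBil (c : CN N) :
    (Fin N → ℂ) →ₗ[ℂ] (Fin N → ℂ) →ₗ[ℂ] (Fin N → ℂ) :=
  LinearMap.mk₂ ℂ (fun v w => fun k => ∑ i, ∑ j, v i * w j * c i j k)
    (by intro m₁ m₂ n; funext k; simp [add_mul, Finset.sum_add_distrib])
    (by intro a m n; funext k
        simp [Finset.mul_sum, mul_assoc])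
    (by intro m n₁ n₂; funext k; simp [mul_add, add_mul, Finset.sum_add_distrib])
    (by intro a m n; funext k
        simp [Finset.mul_sum, mul_assoc]
        congr 1; funext i; congr 1; funext j; ring)

lemma toBil_apply (c : CN N) (v w : Fin N → ℂ) (k : Fin N) :
    toBil c v w k = ∑ i, ∑ j, v i * w j * c i j k := rfl

def coords (B : (Fin N → ℂ) →ₗ[ℂ] (Fin N → ℂ) →ₗ[ℂ] (Fin N → ℂ)) : CN N :=
  fun i j k => B (Pi.single i 1) (Pi.single j 1) k

lemma coords_toBil (c : CN N) : coords (toBil c) = c := by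
  funext p q k
  simp only [coords, toBil_apply, Pi.single_apply]
  rw [Finset.sum_eq_single p]
  · rw [Finset.sum_eq_single q] <;> simp +contextual
  · simp +contextual
  · simp

lemma toBil_coords (B : (Fin N → ℂ) →ₗ[ℂ] (Fin N → ℂ) →ₗ[ℂ] (Fin N → ℂ)) :
    toBil (coords B) = B := by
  apply (Pi.basisFun ℂ (Fin N)).ext; intro p
  apply (Pi.basisFun ℂ (Fin N)).ext; intro q
  funext k
  simp only [Pi.basisFun_apply, toBil_apply, coords]
  rw [Finset.sum_eq_single p]
  · rw [Finset.sum_eq_single q]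
    · simp [Pi.single_apply]
    · intro b _ hb; simp [Pi.single_apply, hb]
    · simp
  · intro b _ hb; simp [Pi.single_apply, hb]
  · simp

lemma toBil_add (c d : CN N) : toBil (c + d) = toBil c + toBil d := by
  apply LinearMap.ext; intro v; apply LinearMap.ext; intro w; funext k
  simp [toBil_apply, mul_add, Finset.sum_add_distrib]

lemma toBil_smul (t : ℂ) (c : CN N) : toBil (t • c) = t • toBil c := by
  apply LinearMap.ext; intro v; apply LinearMap.ext; intro w; funext k
  simp [toBil_apply, Finset.mul_sum]
  congr 1; funext i; congr 1; funext j; ring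

lemma toBil_sub (c d : CN N) : toBil (c - d) = toBil c - toBil d := by
  apply LinearMap.ext; intro v; apply LinearMap.ext; intro w; funext k
  simp [toBil_apply, mul_sub, Finset.sum_sub_distrib]

lemma toBil_zero : toBil (0 : CN N) = 0 := by
  apply LinearMap.ext; intro v; apply LinearMap.ext; intro w; funext k
  simp [toBil_apply]

/-- trace of an endomorphism of `ℂ^N` as a sum of diagonal coefficients. -/
lemma trace_eq_sum (f : (Fin N → ℂ) →ₗ[ℂ] (Fin N → ℂ)) :
    LinearMap.trace ℂ (Fin N → ℂ) f = ∑ k, f (Pi.single k 1) k := by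
  rw [LinearMap.trace_eq_matrix_trace ℂ (Pi.basisFun ℂ (Fin N)) f, Matrix.trace]
  refine Finset.sum_congr rfl fun k _ => ?_
  rw [Matrix.diag_apply, LinearMap.toMatrix_apply]
  simp

lemma trace_toBil (c : CN N) (hc : ∀ i, ∑ k, c i k k = 0) (v : Fin N → ℂ) :
    LinearMap.trace ℂ (Fin N → ℂ) (toBil c v) = 0 := by
  rw [trace_eq_sum]
  have : ∀ k : Fin N, toBil c v (Pi.single k 1) k = ∑ i, v i * c i k k := by
    intro k
    rw [toBil_apply]
    refine Finset.sum_congr rfl fun i _ => ?_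
    rw [Finset.sum_eq_single k]
    · simp
    · intro b _ hb; simp [Pi.single_apply, hb]
    · simp
  rw [Finset.sum_congr rfl fun k _ => this k, Finset.sum_comm]
  refine Finset.sum_eq_zero fun i _ => ?_
  rw [← Finset.mul_sum, hc i, mul_zero]

lemma toBil_symm (c : CN N) (hc : ∀ i j k, c i j k = c j i k) (v w : Fin N → ℂ) :
    toBil c v w = toBil c w v := by
  funext k
  rw [toBil_apply, toBil_apply, Finset.sum_comm]
  refine Finset.sum_congr rfl fun i _ => Finset.sum_congr rfl fun j _ => ?_
  rw [hc j i k]; ring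

lemma mulVec_std (a b : Fin N) (u : Fin N → ℂ) :
    (Matrix.single a b (1:ℂ)).mulVec u = fun k => kd k a * u b := by
  funext k
  simp only [Matrix.mulVec, Matrix.single, dotProduct, Matrix.of_apply]
  rw [Finset.sum_eq_single b]
  · by_cases h : k = a
    · subst h; simp [kd]
    · rw [if_neg (by tauto), kd, if_neg h, zero_mul]
  · intro m _ hm; simp [hm, Ne.symm hm]
  · simp

lemma mulVec_std_single (a b j : Fin N) :
    (Matrix.single a b (1:ℂ)).mulVec (Pi.single j 1)
      = kd j b • (Pi.single a 1 : Fin N → ℂ) := by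
  rw [mulVec_std]; funext k
  by_cases h1 : k = a <;> by_cases h2 : j = b <;>
    simp [h1, h2, kd, Pi.single_apply, eq_comm]

lemma mulVec_diag (h : Fin N → ℂ) (j : Fin N) :
    (Matrix.diagonal h).mulVec (Pi.single j 1) = h j • (Pi.single j 1 : Fin N → ℂ) := by
  funext k
  by_cases hk : k = j <;> simp [Matrix.mulVec_diagonal, Pi.single_apply, hk]

section withAct

variable (act : Matrix (Fin N) (Fin N) ℂ →
      ((Fin N → ℂ) →ₗ[ℂ] (Fin N → ℂ) →ₗ[ℂ] (Fin N → ℂ)) →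
      ((Fin N → ℂ) →ₗ[ℂ] (Fin N → ℂ) →ₗ[ℂ] (Fin N → ℂ)))
    (hact : ∀ x B v w,
      act x B v w = x.mulVec (B v w) - B (x.mulVec v) w - B v (x.mulVec w))

include hact

lemma coords_act_E (B) (a b : Fin N) :
    coords (act (Matrix.single a b (1:ℂ)) B) = actC a b (coords B) := by
  funext i j k
  simp only [coords, actC]
  rw [hact, mulVec_std_single, mulVec_std_single]
  simp only [map_smul, LinearMap.smul_apply, Pi.sub_apply, Pi.smul_apply, smul_eq_mul,
    mulVec_std]

lemma coords_act_diag (B) (h : Fin N → ℂ) :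
    coords (act (Matrix.diagonal h) B) = dactC h (coords B) := by
  funext i j k
  simp only [coords, dactC, hact, mulVec_diag, map_smul,
    LinearMap.smul_apply, Pi.sub_apply, Pi.smul_apply, smul_eq_mul, Matrix.mulVec_diagonal]
  ring

lemma act_toBil_E (c : CN N) (a b : Fin N) :
    act (Matrix.single a b (1:ℂ)) (toBil c) = toBil (actC a b c) := by
  conv_lhs => rw [← toBil_coords (act (Matrix.single a b (1:ℂ)) (toBil c))]
  rw [coords_act_E act hact, coords_toBil]

lemma act_toBil_diag (c : CN N) (h : Fin N → ℂ) :
    act (Matrix.diagonal h) (toBil c) = toBil (dactC h c) := by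
  conv_lhs => rw [← toBil_coords (act (Matrix.diagonal h) (toBil c))]
  rw [coords_act_diag act hact, coords_toBil]

end withAct

lemma eigen_extract {M : Type*} [AddCommGroup M] [Module ℂ M] (U : Submodule ℂ M)
    (T : M → M) (hTadd : ∀ x y, T (x + y) = T x + T y)
    (hTsmul : ∀ (t : ℂ) x, T (t • x) = t • T x) (hT : ∀ x ∈ U, T x ∈ U) :
    ∀ (s : Finset ℂ) (f : ℂ → M), (∀ μ ∈ s, T (f μ) = μ • f μ) →
      (∑ μ ∈ s, f μ) ∈ U → ∀ μ₀ ∈ s, f μ₀ ∈ U := by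
  intro s
  induction s using Finset.induction_on with
  | empty => intro f _ _ μ₀ h; simp at h
  | insert ν t hν ih =>
    intro f hf hsum μ₀ hμ₀
    have hTsum : ∀ (u : Finset ℂ) (g : ℂ → M), T (∑ x ∈ u, g x) = ∑ x ∈ u, T (g x) := by
      intro u
      induction u using Finset.induction_on with
      | empty => intro g; simpa [hTsmul 0 0] using hTsmul 0 0
      | insert a w h ih2 =>
        intro g
        rw [Finset.sum_insert h, hTadd, ih2, Finset.sum_insert h]
    have hmemt : ∀ μ ∈ t, f μ ∈ U := by
      intro μ hμ
      have key : (∑ x ∈ t, (x - ν) • f x) ∈ U := by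
        have h1 : T (∑ x ∈ insert ν t, f x) - ν • (∑ x ∈ insert ν t, f x)
            = ∑ x ∈ insert ν t, (x - ν) • f x := by
          rw [hTsum, Finset.smul_sum, ← Finset.sum_sub_distrib]
          refine Finset.sum_congr rfl fun x hx => ?_
          rw [hf x hx, sub_smul]
        have h2 : (∑ x ∈ insert ν t, (x - ν) • f x) = ∑ x ∈ t, (x - ν) • f x := by
          rw [Finset.sum_insert hν, sub_self, zero_smul, zero_add]
        rw [← h2, ← h1]
        exact Submodule.sub_mem U (hT _ hsum) (Submodule.smul_mem U ν hsum)
      have := ih (fun x => (x - ν) • f x)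
        (fun x hx => by rw [hTsmul, hf x (Finset.mem_insert_of_mem hx), smul_comm]) key μ hμ
      have hne : μ - ν ≠ 0 := sub_ne_zero.mpr (fun h => hν (h ▸ hμ))
      have := Submodule.smul_mem U (μ - ν)⁻¹ this
      rwa [smul_smul, inv_mul_cancel₀ hne, one_smul] at this
    rcases Finset.mem_insert.mp hμ₀ with h | h
    · subst h
      have : f μ₀ = (∑ x ∈ insert μ₀ t, f x) - ∑ x ∈ t, f x := by
        rw [Finset.sum_insert hν]; abel
      rw [this]
      exact Submodule.sub_mem U hsum (Submodule.sum_mem U hmemt)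
    · exact hmemt _ h

lemma dactC_add (h : Fin N → ℂ) (c d : CN N) : dactC h (c + d) = dactC h c + dactC h d := by
  funext i j k; simp only [dactC, Pi.add_apply]; ring

lemma dactC_smul (h : Fin N → ℂ) (t : ℂ) (c : CN N) : dactC h (t • c) = t • dactC h c := by
  funext i j k; simp only [dactC, Pi.smul_apply, smul_eq_mul]; ring

open scoped Classical in
/-- weight-space projection: the component of `c` on the coordinate triples whose weight
(on the conditions in `s`) agrees with that of `(p,q,r)` stays in an invariant submodule. -/
lemma proj_mem (hN0 : (N:ℂ) ≠ 0) (V : Submodule ℂ (CN N))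
    (hV : ∀ h : Fin N → ℂ, (∑ i, h i) = 0 → ∀ c ∈ V, dactC h c ∈ V)
    (c : CN N) (hc : c ∈ V) (p q r : Fin N) :
    ∀ s : Finset (Fin N),
      (fun i j k => if (∀ m ∈ s, kd k m - kd i m - kd j m = kd r m - kd p m - kd q m)
        then c i j k else 0) ∈ V := by
  intro s
  induction s using Finset.induction_on with
  | empty =>
    have he : (fun i j k => if (∀ m ∈ (∅ : Finset (Fin N)),
        kd k m - kd i m - kd j m = kd r m - kd p m - kd q m) then c i j k else 0) = c := by
      funext i j k; simp
    rwa [he]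
  | insert m₀ s hm ih =>
    set hv : Fin N → ℂ := fun x => kd x m₀ - (N:ℂ)⁻¹ with hhv
    have hsum0 : (∑ i, hv i) = 0 := by
      rw [hhv]
      rw [Finset.sum_sub_distrib]
      have h1 : (∑ x : Fin N, kd x m₀) = 1 := by
        simp only [kd]
        rw [Finset.sum_ite_eq' Finset.univ m₀ (fun _ => (1:ℂ))]
        simp
      rw [h1, Finset.sum_const, Finset.card_univ, Fintype.card_fin, nsmul_eq_mul,
        mul_inv_cancel₀ hN0, sub_self]
    set D : CN N := fun i j k => if (∀ m ∈ s,
        kd k m - kd i m - kd j m = kd r m - kd p m - kd q m) then c i j k else 0 with hD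
    set f : ℂ → CN N := fun t => fun i j k =>
      if (hv k - hv i - hv j = t ∧ (∀ m ∈ s,
        kd k m - kd i m - kd j m = kd r m - kd p m - kd q m)) then c i j k else 0 with hf
    set s' : Finset ℂ := Finset.image
      (fun x : Fin N × Fin N × Fin N => hv x.2.2 - hv x.1 - hv x.2.1) Finset.univ with hs'
    have hmem : ∀ i j k : Fin N, hv k - hv i - hv j ∈ s' := fun i j k =>
      Finset.mem_image.mpr ⟨(i, j, k), Finset.mem_univ _, rfl⟩
    have hsum' : (∑ t ∈ s', f t) = D := by
      funext i j k
      rw [show (∑ t ∈ s', f t) i j k = ∑ t ∈ s', f t i j k by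
        rw [Finset.sum_apply, Finset.sum_apply, Finset.sum_apply]]
      by_cases hQ : (∀ m ∈ s, kd k m - kd i m - kd j m = kd r m - kd p m - kd q m)
      · have : ∀ t, f t i j k = if hv k - hv i - hv j = t then c i j k else 0 := by
          intro t; simp only [hf]; exact if_congr (and_iff_left hQ) rfl rfl
        rw [Finset.sum_congr rfl fun t _ => this t,
          Finset.sum_ite_eq s' (hv k - hv i - hv j) (fun _ => c i j k),
          if_pos (hmem i j k)]
        simp only [hD]
        rw [if_pos hQ]
      · rw [Finset.sum_eq_zero fun t _ => by rw [hf]; simp [hQ], hD]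
        simp [hQ]
    have heig : ∀ t ∈ s', dactC hv (f t) = t • f t := by
      intro t _
      funext i j k
      simp only [dactC, Pi.smul_apply, smul_eq_mul, hf]
      by_cases hcnd : (hv k - hv i - hv j = t ∧ (∀ m ∈ s,
          kd k m - kd i m - kd j m = kd r m - kd p m - kd q m))
      · rw [if_pos hcnd, hcnd.1]
      · rw [if_neg hcnd, mul_zero, mul_zero]
    have hproj := eigen_extract V (dactC hv) (dactC_add hv) (dactC_smul hv)
      (hV hv hsum0) s' f heig (by rw [hsum']; exact ih) (hv r - hv p - hv q) (hmem p q r)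
    have hfin : f (hv r - hv p - hv q) = fun i j k =>
        if (∀ m ∈ insert m₀ s, kd k m - kd i m - kd j m = kd r m - kd p m - kd q m)
        then c i j k else 0 := by
      funext i j k
      rw [hf]
      refine if_congr ?_ rfl rfl
      rw [Finset.forall_mem_insert]
      constructor
      · rintro ⟨h1, h2⟩
        refine ⟨?_, h2⟩
        rw [hhv] at h1
        linear_combination h1
      · rintro ⟨h1, h2⟩
        refine ⟨?_, h2⟩
        rw [hhv]
        linear_combination h1
    rwa [hfin] at hproj

lemma classB {q i j k : Fin N} (h : ∀ m, kd k m - kd i m - kd j m = - kd q m) :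
    (k = i ∧ j = q) ∨ (k = j ∧ i = q) := by
  by_cases hik : i = k
  · subst hik
    have h2 : ∀ m, kd j m = kd q m := fun m => by linear_combination -(h m)
    have h3 := h2 j
    rw [kd_self] at h3
    left
    refine ⟨rfl, ?_⟩
    by_contra hq
    rw [kd_ne (fun hh => hq hh.symm)] at h3
    norm_num at h3
  · by_cases hjk : j = k
    · subst hjk
      have h2 : ∀ m, kd i m = kd q m := fun m => by linear_combination -(h m)
      have h3 := h2 i
      rw [kd_self] at h3
      right
      refine ⟨rfl, ?_⟩
      by_contra hq
      rw [kd_ne (fun hh => hq hh.symm)] at h3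
      norm_num at h3
    · exfalso
      have h1 := h k
      rw [kd_self, kd_ne hik, kd_ne hjk] at h1
      by_cases hqk : q = k
      · rw [hqk, kd_self] at h1; norm_num at h1
      · rw [kd_ne hqk] at h1; norm_num at h1

lemma classA {p q r i j k : Fin N} (hrp : r ≠ p) (hrq : r ≠ q)
    (h : ∀ m, kd k m - kd i m - kd j m = kd r m - kd p m - kd q m) :
    k = r ∧ ((i = p ∧ j = q) ∨ (i = q ∧ j = p)) := by
  have h1 := h r
  rw [kd_self, kd_ne (Ne.symm hrp), kd_ne (Ne.symm hrq)] at h1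
  have hkey : k = r ∧ i ≠ r ∧ j ≠ r := by
    simp only [kd] at h1
    split_ifs at h1 <;>
      first
        | exact ⟨by assumption, by assumption, by assumption⟩
        | norm_num at h1
  obtain ⟨hkr, hir, hjr⟩ := hkey
  subst hkr
  refine ⟨rfl, ?_⟩
  have h2 : ∀ m, kd i m + kd j m = kd p m + kd q m := fun m => by linear_combination -(h m)
  by_cases hip : i = p
  · subst hip
    have h3 : ∀ m, kd j m = kd q m := fun m => by linear_combination h2 m
    have h4 := h3 j
    rw [kd_self] at h4
    left
    refine ⟨rfl, ?_⟩
    by_contra hq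
    rw [kd_ne (fun hh => hq hh.symm)] at h4
    norm_num at h4
  · by_cases hiq : i = q
    · subst hiq
      have h3 : ∀ m, kd j m = kd p m := fun m => by linear_combination h2 m
      have h4 := h3 j
      rw [kd_self] at h4
      right
      refine ⟨rfl, ?_⟩
      by_contra hq
      rw [kd_ne (fun hh => hq hh.symm)] at h4
      norm_num at h4
    · exfalso
      have h3 := h2 i
      rw [kd_self, kd_ne (fun hh => hip hh.symm), kd_ne (fun hh => hiq hh.symm)] at h3
      by_cases hji : j = i
      · rw [hji, kd_self] at h3; norm_num at h3
      · rw [kd_ne hji] at h3; norm_num at h3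

open scoped Classical in
lemma DeqA (c : CN N) (hsym : ∀ i j k, c i j k = c j i k) {p q r : Fin N}
    (hrp : r ≠ p) (hrq : r ≠ q) :
    (fun i j k => if (∀ m, kd k m - kd i m - kd j m = kd r m - kd p m - kd q m)
      then c i j k else 0)
    = (if p = q then (2:ℂ)⁻¹ * c p q r else c p q r) • P p q r := by
  funext i j k
  simp only [Pi.smul_apply, smul_eq_mul]
  by_cases hcond : ∀ m, kd k m - kd i m - kd j m = kd r m - kd p m - kd q m
  · obtain ⟨hkr, hcase⟩ := classA hrp hrq hcond
    subst hkr
    rw [if_pos hcond]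
    rcases hcase with ⟨h1, h2⟩ | ⟨h1, h2⟩ <;> subst h1 <;> subst h2
    · by_cases hpq : i = j
      · subst hpq
        rw [if_pos rfl]
        simp only [P, kd_self]
        ring
      · rw [if_neg hpq]
        simp only [P, kd_self, kd_ne hpq, kd_ne (Ne.symm hpq)]
        ring
    · by_cases hpq : j = i
      · subst hpq
        rw [if_pos rfl]
        simp only [P, kd_self]
        ring
      · rw [if_neg hpq]
        simp only [P, kd_self, kd_ne hpq, kd_ne (Ne.symm hpq)]
        rw [hsym j i k]
        ring
  · rw [if_neg hcond]
    have hz : P p q r i j k = 0 := by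
      by_cases hk : k = r
      · subst hk
        by_cases h1 : i = p ∧ j = q
        · exact absurd (fun m => by rw [h1.1, h1.2]) hcond
        · by_cases h2 : i = q ∧ j = p
          · exact absurd (fun m => by rw [h2.1, h2.2]; ring) hcond
          · have e1 : kd i p * kd j q = 0 := by
              rcases not_and_or.mp h1 with h | h
              · rw [kd_ne h, zero_mul]
              · rw [kd_ne h, mul_zero]
            have e2 : kd i q * kd j p = 0 := by
              rcases not_and_or.mp h2 with h | h
              · rw [kd_ne h, zero_mul]
              · rw [kd_ne h, mul_zero]
            simp only [P, e1, e2, add_zero, zero_mul]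
      · simp only [P, kd_ne hk, mul_zero]
    rw [hz, mul_zero]

open scoped Classical in
lemma extractB (c : CN N) (hsym : ∀ i j k, c i j k = c j i k) (q : Fin N)
    (D : CN N)
    (hD : D = fun i j k => if (∀ m, kd k m - kd i m - kd j m = - kd q m)
      then c i j k else 0)
    {a : Fin N} (ha : a ≠ q) :
    actC a q D = ((2:ℂ)⁻¹ * D q q q - D a q a) • P q q a := by
  have hDsupp : ∀ i j k, D i j k ≠ 0 → (k = i ∧ j = q) ∨ (k = j ∧ i = q) := by
    intro i j k hne
    simp only [hD] at hne
    by_cases hcond : ∀ m, kd k m - kd i m - kd j m = - kd q m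
    · exact classB hcond
    · rw [if_neg hcond] at hne; exact absurd rfl hne
  have hDsym : ∀ i j k, D i j k = D j i k := by
    intro i j k
    rw [hD]
    refine if_congr ?_ (hsym i j k) rfl
    constructor <;> intro hh m <;> linear_combination hh m
  have E1 : ∀ i j, D i j q = kd i q * kd j q * D q q q := by
    intro i j
    by_cases hi : i = q <;> by_cases hj : j = q
    · subst hi; subst hj; rw [kd_self]; ring
    · have hz : D i j q = 0 := by
        by_contra hne
        rcases hDsupp i j q hne with ⟨h1, h2⟩ | ⟨h1, h2⟩ <;>
          first | exact hj h2 | exact hj h1.symm | exact hi h1.symm | exact hi h2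
      rw [hz, kd_ne hj]; ring
    · have hz : D i j q = 0 := by
        by_contra hne
        rcases hDsupp i j q hne with ⟨h1, h2⟩ | ⟨h1, h2⟩ <;>
          first | exact hj h2 | exact hj h1.symm | exact hi h1.symm | exact hi h2
      rw [hz, kd_ne hi]; ring
    · have hz : D i j q = 0 := by
        by_contra hne
        rcases hDsupp i j q hne with ⟨h1, h2⟩ | ⟨h1, h2⟩ <;>
          first | exact hj h2 | exact hj h1.symm | exact hi h1.symm | exact hi h2
      rw [hz, kd_ne hi]; ring
  have E2 : ∀ j k, D a j k = kd j q * kd k a * D a q a := by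
    intro j k
    by_cases hj : j = q <;> by_cases hk : k = a
    · subst hj; subst hk; rw [kd_self, kd_self]; ring
    · have hz : D a j k = 0 := by
        by_contra hne
        rcases hDsupp a j k hne with ⟨h1, h2⟩ | ⟨h1, h2⟩
        · exact hk h1
        · exact ha h2
      rw [hz, kd_ne hk]; ring
    · have hz : D a j k = 0 := by
        by_contra hne
        rcases hDsupp a j k hne with ⟨h1, h2⟩ | ⟨h1, h2⟩
        · exact hj h2
        · exact ha h2
      rw [hz, kd_ne hj]; ring
    · have hz : D a j k = 0 := by
        by_contra hne
        rcases hDsupp a j k hne with ⟨h1, h2⟩ | ⟨h1, h2⟩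
        · exact hj h2
        · exact ha h2
      rw [hz, kd_ne hj]; ring
  have E3 : ∀ i k, D i a k = kd i q * kd k a * D a q a := by
    intro i k
    have : D i a k = D a i k := (hDsym a i k).symm
    rw [this, E2 i k]
  funext i j k
  simp only [actC, Pi.smul_apply, smul_eq_mul, P]
  rw [E1 i j, E2 j k, E3 i k]
  ring

section nav

variable {V : Submodule ℂ (CN N)}

lemma nav_cube (hV : ∀ a b : Fin N, a ≠ b → ∀ c ∈ V, actC a b c ∈ V)
    {x y : Fin N} (hxy : x ≠ y) (h : P x x y ∈ V) : P y y x ∈ V := by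
  have e1 : actC x y (P x x y) = P x x x - (2:ℂ) • P y x y := by
    rw [actC_P]
    simp only [kd_self, kd_ne hxy, kd_ne (Ne.symm hxy), one_smul, zero_smul]
    rw [P_comm x y y]
    module
  have h1 : P x x x - (2:ℂ) • P y x y ∈ V := e1 ▸ hV x y hxy _ h
  have e2 : actC x y (P x x x - (2:ℂ) • P y x y)
      = -(4:ℂ) • P y x x + (2:ℂ) • P y y y := by
    rw [actC_sub, actC_smul, actC_P, actC_P]
    simp only [kd_self, kd_ne hxy, kd_ne (Ne.symm hxy), one_smul, zero_smul]
    rw [P_comm x y x]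
    module
  have h2 : -(4:ℂ) • P y x x + (2:ℂ) • P y y y ∈ V := e2 ▸ hV x y hxy _ h1
  have e3 : actC x y (-(4:ℂ) • P y x x + (2:ℂ) • P y y y) = (6:ℂ) • P y y x := by
    rw [actC_add, actC_smul, actC_smul, actC_P, actC_P]
    simp only [kd_self, kd_ne hxy, kd_ne (Ne.symm hxy), one_smul, zero_smul]
    module
  have h3 : (6:ℂ) • P y y x ∈ V := e3 ▸ hV x y hxy _ h2
  have h4 := V.smul_mem ((6:ℂ)⁻¹) h3
  rw [smul_smul] at h4
  norm_num at h4
  exact h4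

lemma nav_all (hV : ∀ a b : Fin N, a ≠ b → ∀ c ∈ V, actC a b c ∈ V)
    {p q r : Fin N} (hrp : r ≠ p) (hrq : r ≠ q) (hP : P p q r ∈ V) :
    (∀ u v w : Fin N, w ≠ u → w ≠ v → P u v w ∈ V) ∧
    (∀ u v : Fin N, u ≠ v → (P u v u - (2:ℂ)⁻¹ • P v v v) ∈ V) := by
  have hpp : P p p r ∈ V := by
    by_cases hpq : p = q
    · subst hpq; exact hP
    · have e : actC q p (P p q r) = -P p p r := by
        rw [actC_P]
        simp only [kd_self, kd_ne (Ne.symm hrp), kd_ne (fun h => hpq h.symm),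
          one_smul, zero_smul]
        module
      have h0 := hV q p (fun h => hpq h.symm) _ hP
      rw [e] at h0
      have h1 := V.neg_mem h0
      rwa [neg_neg] at h1
  have hppa : ∀ a, a ≠ p → P p p a ∈ V := by
    intro a hap
    by_cases har : a = r
    · subst har; exact hpp
    · have e : actC a r (P p p r) = P p p a := by
        rw [actC_P]
        simp only [kd_self, kd_ne hap, one_smul, zero_smul]
        module
      have h0 := hV a r har _ hpp
      rwa [e] at h0
  have hsst : ∀ s t : Fin N, t ≠ s → P s s t ∈ V := by
    intro s t hts
    by_cases hsp : s = p
    · subst hsp; exact hppa t hts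
    · have h1 : P p p s ∈ V := hppa s hsp
      have h2 : P s s p ∈ V := nav_cube hV (fun h => hsp h.symm) h1
      by_cases htp : t = p
      · subst htp; exact h2
      · have e : actC t p (P s s p) = P s s t := by
          rw [actC_P]
          simp only [kd_self, kd_ne hts, one_smul, zero_smul]
          module
        have h0 := hV t p htp _ h2
        rwa [e] at h0
  have hgen : ∀ u v w : Fin N, w ≠ u → w ≠ v → P u v w ∈ V := by
    intro u v w hwu hwv
    by_cases huv : u = v
    · subst huv; exact hsst u w hwu
    · have h1 : P u u w ∈ V := hsst u w hwu
      have e : actC u v (P u u w) = -(2:ℂ) • P u v w := by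
        rw [actC_P]
        simp only [kd_self, kd_ne (show v ≠ w from fun h => hwv h.symm), one_smul, zero_smul]
        rw [P_comm v u w]
        module
      have h0 := hV u v huv _ h1
      rw [e] at h0
      have h2 := V.smul_mem ((-(2:ℂ))⁻¹) h0
      rw [smul_smul] at h2
      norm_num at h2
      exact h2
  refine ⟨hgen, ?_⟩
  intro u v huv
  have h1 : P v v u ∈ V := hsst v u huv
  have e : actC v u (P v v u) = P v v v - (2:ℂ) • P u v u := by
    rw [actC_P]
    simp only [kd_self, one_smul]
    rw [P_comm v u u]
    module
  have h0 := hV v u (fun h => huv h.symm) _ h1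
  rw [e] at h0
  have e2 : P u v u - (2:ℂ)⁻¹ • P v v v = (-(2:ℂ)⁻¹) • (P v v v - (2:ℂ) • P u v u) := by
    module
  rw [e2]
  exact V.smul_mem _ h0

end nav

lemma triple_collapse (g : Fin N → Fin N → Fin N → ℂ) (i j k : Fin N)
    (hz : ∀ p q r, (p ≠ i ∨ q ≠ j ∨ r ≠ k) → g p q r = 0) :
    (∑ p, ∑ q, ∑ r, g p q r) = g i j k := by
  rw [Finset.sum_eq_single i]
  · rw [Finset.sum_eq_single j]
    · rw [Finset.sum_eq_single k]
      · intro r _ hr; exact hz i j r (by tauto)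
      · simp
    · intro q _ hq; exact Finset.sum_eq_zero fun r _ => hz i q r (by tauto)
    · simp
  · intro p _ hp
    exact Finset.sum_eq_zero fun q _ => Finset.sum_eq_zero fun r _ => hz p q r (by tauto)
  · simp

lemma double_collapse (g : Fin N → Fin N → ℂ) (i j : Fin N)
    (hz : ∀ p q, (p ≠ i ∨ q ≠ j) → g p q = 0) :
    (∑ p, ∑ q, g p q) = g i j := by
  rw [Finset.sum_eq_single i]
  · rw [Finset.sum_eq_single j]
    · intro q _ hq; exact hz i q (by tauto)
    · simp
  · intro p _ hp; exact Finset.sum_eq_zero fun q _ => hz p q (by tauto)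
  · simp

open scoped Classical in
lemma spanning (c : CN N) (hsym : ∀ i j k, c i j k = c j i k)
    (htr : ∀ i, ∑ k, c i k k = 0) :
    c = (∑ p, ∑ q, ∑ r, if (r ≠ p ∧ r ≠ q) then ((2:ℂ)⁻¹ * c p q r) • P p q r else 0)
      + (∑ p, ∑ q, if p ≠ q then (c p q p) • (P p q p - (2:ℂ)⁻¹ • P q q q) else 0) := by
  funext i j k
  simp only [Pi.add_apply, Finset.sum_apply, ite_apply, Pi.zero_apply, Pi.smul_apply,
    Pi.sub_apply, smul_eq_mul, P]
  -- first triple sum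
  have key1 : (∑ p, ∑ q, ∑ r, if (r ≠ p ∧ r ≠ q) then
        ((2:ℂ)⁻¹ * c p q r) * ((kd i p * kd j q + kd i q * kd j p) * kd k r) else 0)
      = (if (k ≠ i ∧ k ≠ j) then (2:ℂ)⁻¹ * c i j k else 0)
        + (if (k ≠ j ∧ k ≠ i) then (2:ℂ)⁻¹ * c j i k else 0) := by
    have hsplit : ∀ p q r : Fin N, (if (r ≠ p ∧ r ≠ q) then
          ((2:ℂ)⁻¹ * c p q r) * ((kd i p * kd j q + kd i q * kd j p) * kd k r) else 0)
        = (if (r ≠ p ∧ r ≠ q) then (2:ℂ)⁻¹ * c p q r * (kd i p * kd j q * kd k r) else 0)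
          + (if (r ≠ p ∧ r ≠ q) then (2:ℂ)⁻¹ * c p q r * (kd i q * kd j p * kd k r) else 0) := by
      intro p q r
      by_cases hc : r ≠ p ∧ r ≠ q
      · rw [if_pos hc, if_pos hc, if_pos hc]; ring
      · rw [if_neg hc, if_neg hc, if_neg hc]; ring
    have e : (∑ p, ∑ q, ∑ r, if (r ≠ p ∧ r ≠ q) then
          ((2:ℂ)⁻¹ * c p q r) * ((kd i p * kd j q + kd i q * kd j p) * kd k r) else 0)
        = (∑ p, ∑ q, ∑ r, if (r ≠ p ∧ r ≠ q) then
            (2:ℂ)⁻¹ * c p q r * (kd i p * kd j q * kd k r) else 0)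
          + (∑ p, ∑ q, ∑ r, if (r ≠ p ∧ r ≠ q) then
            (2:ℂ)⁻¹ * c p q r * (kd i q * kd j p * kd k r) else 0) := by
      rw [← Finset.sum_add_distrib]
      refine Finset.sum_congr rfl fun p _ => ?_
      rw [← Finset.sum_add_distrib]
      refine Finset.sum_congr rfl fun q _ => ?_
      rw [← Finset.sum_add_distrib]
      exact Finset.sum_congr rfl fun r _ => hsplit p q r
    rw [e]
    have c1 : (∑ p, ∑ q, ∑ r, if (r ≠ p ∧ r ≠ q) then
          (2:ℂ)⁻¹ * c p q r * (kd i p * kd j q * kd k r) else 0)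
        = (if (k ≠ i ∧ k ≠ j) then (2:ℂ)⁻¹ * c i j k else 0) := by
      rw [triple_collapse _ i j k]
      · by_cases hc : k ≠ i ∧ k ≠ j
        · rw [if_pos hc, if_pos hc, kd_self, kd_self, kd_self]; ring
        · rw [if_neg hc, if_neg hc]
      · intro p q r hor
        by_cases hc : r ≠ p ∧ r ≠ q
        · rw [if_pos hc]
          rcases hor with h | h | h <;> rw [kd_ne (Ne.symm h)] <;> ring
        · rw [if_neg hc]
    have c2 : (∑ p, ∑ q, ∑ r, if (r ≠ p ∧ r ≠ q) then
          (2:ℂ)⁻¹ * c p q r * (kd i q * kd j p * kd k r) else 0)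
        = (if (k ≠ j ∧ k ≠ i) then (2:ℂ)⁻¹ * c j i k else 0) := by
      rw [triple_collapse _ j i k]
      · by_cases hc : k ≠ j ∧ k ≠ i
        · rw [if_pos hc, if_pos hc, kd_self, kd_self, kd_self]; ring
        · rw [if_neg hc, if_neg hc]
      · intro p q r hor
        by_cases hc : r ≠ p ∧ r ≠ q
        · rw [if_pos hc]
          rcases hor with h | h | h
          · rw [kd_ne (Ne.symm h)]; ring
          · rw [kd_ne (Ne.symm h)]; ring
          · rw [kd_ne (Ne.symm h)]; ring
        · rw [if_neg hc]
    rw [c1, c2]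
  -- second double sum
  have key2 : (∑ p, ∑ q, if p ≠ q then (c p q p) *
        (((kd i p * kd j q + kd i q * kd j p) * kd k p)
          - (2:ℂ)⁻¹ * ((kd i q * kd j q + kd i q * kd j q) * kd k q)) else 0)
      = (if i ≠ j then c i j i * kd k i else 0) + (if j ≠ i then c j i j * kd k j else 0)
        - kd j i * kd k i * (∑ p, if p ≠ i then c p i p else 0) := by
    have hsplit : ∀ p q : Fin N, (if p ≠ q then (c p q p) *
          (((kd i p * kd j q + kd i q * kd j p) * kd k p)
            - (2:ℂ)⁻¹ * ((kd i q * kd j q + kd i q * kd j q) * kd k q)) else 0)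
        = (if p ≠ q then c p q p * (kd i p * kd j q * kd k p) else 0)
          + (if p ≠ q then c p q p * (kd i q * kd j p * kd k p) else 0)
          + (if p ≠ q then -(c p q p * (kd i q * kd j q * kd k q)) else 0) := by
      intro p q
      by_cases hc : p ≠ q
      · rw [if_pos hc, if_pos hc, if_pos hc, if_pos hc]; ring
      · rw [if_neg hc, if_neg hc, if_neg hc, if_neg hc]; ring
    have e : (∑ p, ∑ q, if p ≠ q then (c p q p) *
          (((kd i p * kd j q + kd i q * kd j p) * kd k p)
            - (2:ℂ)⁻¹ * ((kd i q * kd j q + kd i q * kd j q) * kd k q)) else 0)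
        = (∑ p, ∑ q, if p ≠ q then c p q p * (kd i p * kd j q * kd k p) else 0)
          + (∑ p, ∑ q, if p ≠ q then c p q p * (kd i q * kd j p * kd k p) else 0)
          + (∑ p, ∑ q, if p ≠ q then -(c p q p * (kd i q * kd j q * kd k q)) else 0) := by
      rw [← Finset.sum_add_distrib, ← Finset.sum_add_distrib]
      refine Finset.sum_congr rfl fun p _ => ?_
      rw [← Finset.sum_add_distrib, ← Finset.sum_add_distrib]
      exact Finset.sum_congr rfl fun q _ => hsplit p q
    rw [e]
    have u1 : (∑ p, ∑ q, if p ≠ q then c p q p * (kd i p * kd j q * kd k p) else 0)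
        = (if i ≠ j then c i j i * kd k i else 0) := by
      rw [double_collapse _ i j]
      · by_cases hc : i ≠ j
        · rw [if_pos hc, if_pos hc, kd_self, kd_self]; ring
        · rw [if_neg hc, if_neg hc]
      · intro p q hor
        by_cases hc : p ≠ q
        · rw [if_pos hc]
          rcases hor with h | h <;> rw [kd_ne (Ne.symm h)] <;> ring
        · rw [if_neg hc]
    have u2 : (∑ p, ∑ q, if p ≠ q then c p q p * (kd i q * kd j p * kd k p) else 0)
        = (if j ≠ i then c j i j * kd k j else 0) := by
      rw [double_collapse _ j i]
      · by_cases hc : j ≠ i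
        · rw [if_pos hc, if_pos hc, kd_self, kd_self]; ring
        · rw [if_neg hc, if_neg hc]
      · intro p q hor
        by_cases hc : p ≠ q
        · rw [if_pos hc]
          rcases hor with h | h <;> rw [kd_ne (Ne.symm h)] <;> ring
        · rw [if_neg hc]
    have u3 : (∑ p, ∑ q, if p ≠ q then -(c p q p * (kd i q * kd j q * kd k q)) else 0)
        = - (kd j i * kd k i * (∑ p, if p ≠ i then c p i p else 0)) := by
      have inner : ∀ p : Fin N, (∑ q, if p ≠ q then -(c p q p * (kd i q * kd j q * kd k q)) else 0)
          = -(kd j i * kd k i) * (if p ≠ i then c p i p else 0) := by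
        intro p
        rw [Finset.sum_eq_single i]
        · by_cases hc : p ≠ i
          · rw [if_pos hc, if_pos hc, kd_self]; ring
          · rw [if_neg hc, if_neg hc]; ring
        · intro q _ hq
          by_cases hc : p ≠ q
          · rw [if_pos hc, kd_ne (Ne.symm hq)]; ring
          · rw [if_neg hc]
        · simp
      rw [Finset.sum_congr rfl fun p _ => inner p, ← Finset.mul_sum]
      ring
    rw [u1, u2, u3]
    ring
  rw [key1, key2]
  -- final case analysis
  have htr2 : (∑ p, if p ≠ i then c p i p else 0) = - c i i i := by
    have hterm : ∀ p : Fin N, (if p ≠ i then c p i p else 0)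
        = c i p p - (if p = i then c i i i else 0) := by
      intro p
      by_cases hp : p = i
      · subst hp; simp
      · rw [if_pos hp, if_neg hp, hsym p i p]; ring
    rw [Finset.sum_congr rfl fun p _ => hterm p, Finset.sum_sub_distrib, htr i,
      Finset.sum_ite_eq' Finset.univ i (fun _ => c i i i)]
    simp
  by_cases hki : k = i
  · by_cases hkj : k = j
    · have hij : i = j := by rw [← hki, hkj]
      rw [htr2]
      rw [if_neg (fun hc : k ≠ i ∧ k ≠ j => hc.1 hki),
        if_neg (fun hc : k ≠ j ∧ k ≠ i => hc.1 hkj),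
        if_neg (fun hc : i ≠ j => hc hij), if_neg (fun hc : j ≠ i => hc hij.symm)]
      rw [show (j : Fin N) = i from hij.symm, hki, kd_self]
      ring
    · have hij : ¬ i = j := fun h => hkj (hki.trans h)
      rw [if_neg (fun hc : k ≠ i ∧ k ≠ j => hc.1 hki),
        if_neg (fun hc : k ≠ j ∧ k ≠ i => hc.2 hki),
        if_pos (hij : i ≠ j), if_pos (fun h => hij h.symm : j ≠ i), hki, kd_self]
      simp only [kd_ne (fun h : i = j => hij h), kd_ne (fun h : j = i => hij h.symm)]
      ring
  · by_cases hkj : k = j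
    · have hij : ¬ i = j := fun h => hki (hkj.trans h.symm)
      rw [if_neg (fun hc : k ≠ i ∧ k ≠ j => hc.2 hkj),
        if_neg (fun hc : k ≠ j ∧ k ≠ i => hc.1 hkj),
        if_pos (hij : i ≠ j), if_pos (fun h => hij h.symm : j ≠ i), hkj, kd_self,
        hsym j i j]
      simp only [kd_ne (fun h : j = i => hij h.symm)]
      ring
    · rw [if_pos (⟨hki, hkj⟩ : k ≠ i ∧ k ≠ j), if_pos (⟨hkj, hki⟩ : k ≠ j ∧ k ≠ i),
        kd_ne hki, kd_ne hkj, hsym j i k]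
      by_cases hij : i = j
      · rw [if_neg (fun hc : i ≠ j => hc hij), if_neg (fun hc : j ≠ i => hc hij.symm)]
        ring
      · rw [if_pos (hij : i ≠ j), if_pos (fun h => hij h.symm : j ≠ i)]
        ring

open scoped Classical in
lemma caseA (hN0 : (N:ℂ) ≠ 0) (V : Submodule ℂ (CN N))
    (hVD : ∀ h : Fin N → ℂ, (∑ i, h i) = 0 → ∀ c ∈ V, dactC h c ∈ V)
    (c : CN N) (hcV : c ∈ V) (hcsym : ∀ i j k, c i j k = c j i k)
    {p q r : Fin N} (hrp : r ≠ p) (hrq : r ≠ q) (hne : c p q r ≠ 0) : P p q r ∈ V := by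
  have h0 := proj_mem hN0 V hVD c hcV p q r Finset.univ
  have he : (fun i j k => if (∀ m ∈ Finset.univ,
        kd k m - kd i m - kd j m = kd r m - kd p m - kd q m) then c i j k else 0)
      = (fun i j k => if (∀ m, kd k m - kd i m - kd j m = kd r m - kd p m - kd q m)
        then c i j k else 0) := by
    funext i j k
    exact if_congr ⟨fun h m => h m (Finset.mem_univ m), fun h m _ => h m⟩ rfl rfl
  rw [he, DeqA c hcsym hrp hrq] at h0
  have ht : (if p = q then (2:ℂ)⁻¹ * c p q r else c p q r) ≠ 0 := by
    by_cases hpq : p = q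
    · rw [if_pos hpq]; exact mul_ne_zero (by norm_num) hne
    · rw [if_neg hpq]; exact hne
  have h1 := V.smul_mem (if p = q then (2:ℂ)⁻¹ * c p q r else c p q r)⁻¹ h0
  rwa [smul_smul, inv_mul_cancel₀ ht, one_smul] at h1

open scoped Classical in
lemma caseB (hN0 : (N:ℂ) ≠ 0) (hN1 : 1 ≤ N) (V : Submodule ℂ (CN N))
    (hVE : ∀ a b : Fin N, a ≠ b → ∀ c ∈ V, actC a b c ∈ V)
    (hVD : ∀ h : Fin N → ℂ, (∑ i, h i) = 0 → ∀ c ∈ V, dactC h c ∈ V)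
    (c : CN N) (hcV : c ∈ V) (hcsym : ∀ i j k, c i j k = c j i k)
    (hctr : ∀ i, ∑ k, c i k k = 0) (p q : Fin N) (hne : c p q p ≠ 0) :
    ∃ a : Fin N, a ≠ q ∧ P q q a ∈ V := by
  set D : CN N := fun i j k =>
    if (∀ m, kd k m - kd i m - kd j m = - kd q m) then c i j k else 0 with hD
  have hDV : D ∈ V := by
    have h0 := proj_mem hN0 V hVD c hcV p q p Finset.univ
    have he : (fun i j k => if (∀ m ∈ Finset.univ,
          kd k m - kd i m - kd j m = kd p m - kd p m - kd q m) then c i j k else 0) = D := by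
      funext i j k
      refine if_congr ?_ rfl rfl
      constructor
      · intro h m; linear_combination h m (Finset.mem_univ m)
      · intro h m _; linear_combination h m
    rwa [he] at h0
  have hDpqp : D p q p = c p q p := by
    simp only [hD]
    exact if_pos (fun m => by ring)
  have hDtr : ∀ k, D k q k = c q k k := by
    intro k
    simp only [hD]
    rw [if_pos (fun m => by ring)]
    exact hcsym k q k
  obtain ⟨a, haq, hcoef⟩ : ∃ a : Fin N, a ≠ q ∧ (2:ℂ)⁻¹ * D q q q - D a q a ≠ 0 := by
    by_contra hcon
    push_neg at hcon
    have hq0 : D q q q = 0 := by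
      have hsume : (∑ k, D k q k) = 0 := by
        rw [Finset.sum_congr rfl fun k _ => hDtr k]; exact hctr q
      have hsplit : (∑ k, D k q k) = D q q q + ∑ k ∈ Finset.univ.erase q, D k q k :=
        (Finset.add_sum_erase _ _ (Finset.mem_univ q)).symm
      have herase : ∀ k ∈ Finset.univ.erase q, D k q k = 2⁻¹ * D q q q := by
        intro k hk
        have hkq : k ≠ q := Finset.ne_of_mem_erase hk
        have h1 := hcon k hkq
        linear_combination -h1
      rw [Finset.sum_congr rfl herase, Finset.sum_const,
        Finset.card_erase_of_mem (Finset.mem_univ q), Finset.card_univ, Fintype.card_fin,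
        nsmul_eq_mul] at hsplit
      rw [hsume, Nat.cast_sub hN1, Nat.cast_one] at hsplit
      have h2 : D q q q * ((N:ℂ) + 1) = 0 := by linear_combination -2 * hsplit
      rcases mul_eq_zero.mp h2 with h3 | h3
      · exact h3
      · exfalso
        have : ((N:ℂ) + 1) ≠ 0 := by
          have : ((N + 1 : ℕ) : ℂ) ≠ 0 := Nat.cast_ne_zero.mpr (Nat.succ_ne_zero N)
          push_cast at this
          exact this
        exact this h3
    have hall : D p q p = 0 := by
      by_cases hpq : p = q
      · rw [hpq]; exact hq0
      · have h1 := hcon p hpq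
        rw [hq0] at h1
        linear_combination -h1
    rw [hDpqp] at hall
    exact hne hall
  refine ⟨a, haq, ?_⟩
  have hmem := hVE a q haq _ hDV
  rw [extractB c hcsym q D hD haq] at hmem
  have h1 := V.smul_mem ((2:ℂ)⁻¹ * D q q q - D a q a)⁻¹ hmem
  rwa [smul_smul, inv_mul_cancel₀ hcoef, one_smul] at h1

end

end SlIrredAux

open SlIrredAux in
/-- For `N ≥ 2`, the space `W` of symmetric bilinear maps
`B : ℂ^N × ℂ^N → ℂ^N` all of whose partial evaluations `w ↦ B(v,w)` are traceless
endomorphisms is a nonzero irreducible module over `sl(N,ℂ)` (the trace-zero `N × N`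
complex matrices), for the action `(x·B)(v,w) = x(B(v,w)) − B(xv,w) − B(v,xw)`:
its only Lie submodules are `0` and `W`. -/
theorem sl_irreducible_sym2_traceless (N : ℕ) (hN : 2 ≤ N)
    (W : Set ((Fin N → ℂ) →ₗ[ℂ] (Fin N → ℂ) →ₗ[ℂ] (Fin N → ℂ)))
    (hW : W = {B | (∀ v w, B v w = B w v) ∧
      ∀ v, LinearMap.trace ℂ (Fin N → ℂ) (B v) = 0})
    (act : Matrix (Fin N) (Fin N) ℂ →
      ((Fin N → ℂ) →ₗ[ℂ] (Fin N → ℂ) →ₗ[ℂ] (Fin N → ℂ)) →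
      ((Fin N → ℂ) →ₗ[ℂ] (Fin N → ℂ) →ₗ[ℂ] (Fin N → ℂ)))
    (hact : ∀ x B v w,
      act x B v w = x.mulVec (B v w) - B (x.mulVec v) w - B v (x.mulVec w)) :
    (∃ B ∈ W, B ≠ 0) ∧
      ∀ U : Submodule ℂ ((Fin N → ℂ) →ₗ[ℂ] (Fin N → ℂ) →ₗ[ℂ] (Fin N → ℂ)),
        (U : Set _) ⊆ W →
        (∀ B ∈ U, ∀ x : Matrix (Fin N) (Fin N) ℂ, x.trace = 0 → act x B ∈ U) →
        U = ⊥ ∨ (U : Set _) = W := by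
  subst hW
  have hzo : (⟨0, by omega⟩ : Fin N) ≠ (⟨1, by omega⟩ : Fin N) := by
    intro h
    exact absurd (Fin.mk.injEq _ _ _ _ ▸ h) (by norm_num)
  set z : Fin N := ⟨0, by omega⟩
  set o : Fin N := ⟨1, by omega⟩
  constructor
  · refine ⟨toBil (P z z o), ⟨?_, ?_⟩, ?_⟩
    · intro v w
      exact toBil_symm _ (fun i j k => by simp only [P]; ring) v w
    · intro v
      apply trace_toBil
      intro i
      apply Finset.sum_eq_zero
      intro k _
      simp only [P]
      by_cases hk : k = z
      · rw [hk, kd_ne hzo]; ring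
      · simp only [kd_ne hk]; ring
    · intro h0
      have h1 := congrArg (fun B => coords B z z o) h0
      simp only [coords_toBil] at h1
      have h2 : P z z o z z o = 0 := by
        simpa [coords] using h1
      simp only [P, kd_self] at h2
      norm_num at h2
  · intro U hUW hUinv
    by_cases hU0 : U = ⊥
    · exact Or.inl hU0
    right
    let V : Submodule ℂ (CN N) :=
      { carrier := {c | toBil c ∈ U}
        add_mem' := fun {a b} ha hb => by
          simp only [Set.mem_setOf_eq, toBil_add] at *
          exact U.add_mem ha hb
        zero_mem' := by
          simp only [Set.mem_setOf_eq, toBil_zero]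
          exact U.zero_mem
        smul_mem' := fun t a ha => by
          simp only [Set.mem_setOf_eq, toBil_smul] at *
          exact U.smul_mem t ha }
    have hVmem : ∀ c : CN N, c ∈ V ↔ toBil c ∈ U := fun c => Iff.rfl
    have hVE : ∀ a b : Fin N, a ≠ b → ∀ c ∈ V, actC a b c ∈ V := by
      intro a b hab c hc
      rw [hVmem, ← act_toBil_E act hact]
      exact hUinv _ ((hVmem c).mp hc) _ (Matrix.trace_single_eq_of_ne a b 1 hab)
    have hVD : ∀ h : Fin N → ℂ, (∑ i, h i) = 0 → ∀ c ∈ V, dactC h c ∈ V := by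
      intro h hsum c hc
      rw [hVmem, ← act_toBil_diag act hact]
      refine hUinv _ ((hVmem c).mp hc) _ ?_
      rw [Matrix.trace_diagonal]
      exact hsum
    obtain ⟨B, hBU, hBne⟩ := (Submodule.ne_bot_iff U).mp hU0
    obtain ⟨hBsym, hBtr⟩ := hUW hBU
    set c : CN N := coords B with hcdef
    have hcsym : ∀ i j k, c i j k = c j i k := by
      intro i j k
      simp only [hcdef, coords]
      rw [hBsym]
    have hctr : ∀ i, ∑ k, c i k k = 0 := by
      intro i
      have h1 := hBtr (Pi.single i 1)
      rw [trace_eq_sum] at h1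
      exact h1
    have hcV : c ∈ V := by
      rw [hVmem, hcdef, toBil_coords]
      exact hBU
    have hN0 : (N:ℂ) ≠ 0 := Nat.cast_ne_zero.mpr (by omega)
    obtain ⟨p, q, r, hpqr⟩ : ∃ p q r, c p q r ≠ 0 := by
      by_contra hcon
      push_neg at hcon
      apply hBne
      have hz2 : c = 0 := by funext p q r; exact hcon p q r
      rw [← toBil_coords B, ← hcdef, hz2, toBil_zero]
    have hbase : ∃ p' q' r' : Fin N, r' ≠ p' ∧ r' ≠ q' ∧ P p' q' r' ∈ V := by
      by_cases hrp : r = p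
      · subst hrp
        obtain ⟨a, haq, hPa⟩ := caseB hN0 (by omega) V hVE hVD c hcV hcsym hctr r q hpqr
        exact ⟨q, q, a, haq, haq, hPa⟩
      · by_cases hrq : r = q
        · subst hrq
          have hne' : c r p r ≠ 0 := by
            rw [hcsym r p r]
            exact hpqr
          obtain ⟨a, hap, hPa⟩ := caseB hN0 (by omega) V hVE hVD c hcV hcsym hctr r p hne'
          exact ⟨p, p, a, hap, hap, hPa⟩
        · exact ⟨p, q, r, hrp, hrq, caseA hN0 V hVD c hcV hcsym hrp hrq hpqr⟩
    obtain ⟨p', q', r', h1, h2, hPV⟩ := hbase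
    obtain ⟨hgen, hTmem⟩ := nav_all hVE h1 h2 hPV
    apply Set.Subset.antisymm hUW
    intro B' hB'
    obtain ⟨hB'sym, hB'tr⟩ := hB'
    set c' : CN N := coords B' with hc'def
    have hc'sym : ∀ i j k, c' i j k = c' j i k := by
      intro i j k
      simp only [hc'def, coords]
      rw [hB'sym]
    have hc'tr : ∀ i, ∑ k, c' i k k = 0 := by
      intro i
      have h1 := hB'tr (Pi.single i 1)
      rw [trace_eq_sum] at h1
      exact h1
    have hc'V : c' ∈ V := by
      rw [spanning c' hc'sym hc'tr]
      apply V.add_mem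
      · apply Submodule.sum_mem
        intro p _
        apply Submodule.sum_mem
        intro q _
        apply Submodule.sum_mem
        intro r _
        by_cases hcond : r ≠ p ∧ r ≠ q
        · rw [if_pos hcond]
          exact V.smul_mem _ (hgen p q r hcond.1 hcond.2)
        · rw [if_neg hcond]
          exact V.zero_mem
      · apply Submodule.sum_mem
        intro p _
        apply Submodule.sum_mem
        intro q _
        by_cases hcond : p ≠ q
        · rw [if_pos hcond]
          exact V.smul_mem _ (hTmem p q hcond)
        · rw [if_neg hcond]
          exact V.zero_mem
    have := (hVmem c').mp hc'V
    rw [hc'def, toBil_coords] at this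
    exact this
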